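/- For real angles φ₁, φ₂ with q₁φ₁ + q₂φ₂ = 0, q₁, q₂ ≥ 0, q₁ + q₂ = 1, the operator norm of exp(iφ_jσ_Z) − (q₁ exp(iφ₁σ_Z) + q₂ exp(iφ₂σ_Z)) equals |e^{iφ_j} − q₁e^{iφ₁} − q₂e^{iφ₂}| for j = 1,2, and consequently δ := Σ_j q_j ‖exp(iφ_jσ_Z) − W̄‖² satisfies δ ≤ q₁φ₁² + q₂φ₂² + C(φ₁⁴ + φ₂⁴) for an absolute constant C. -/

import Mathlib

open scoped Matrix.Norms.L2Operator ComplexOrder Kronecker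
open Matrix Complex

/-- The trace norm (sum of singular values) of a square complex matrix. -/
noncomputable def traceNorm {n : Type*} [Fintype n] [DecidableEq n] (A : Matrix n n ℂ) : ℝ :=
  (((Matrix.posSemidef_conjTranspose_mul_self A).1.eigenvectorUnitary.1 *
      Matrix.diagonal (((↑) : ℝ → ℂ) ∘ (√·) ∘ (Matrix.posSemidef_conjTranspose_mul_self A).1.eigenvalues) *
      (star (Matrix.posSemidef_conjTranspose_mul_self A).1.eigenvectorUnitary : Matrix n n ℂ)).trace).re

lemma norm_diag_conj (z : ℂ) :
    ‖(Matrix.diagonal ![z, (starRingEnd ℂ) z] : Matrix (Fin 2) (Fin 2) ℂ)‖ = ‖z‖ := by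
  set A : Matrix (Fin 2) (Fin 2) ℂ := Matrix.diagonal ![z, (starRingEnd ℂ) z] with hAdef
  have hA : Aᴴ * A = ((‖z‖ : ℝ)^2) • (1 : Matrix (Fin 2) (Fin 2) ℂ) := by
    ext i k
    fin_cases i <;> fin_cases k <;>
      simp [hAdef, Matrix.mul_apply, Fin.sum_univ_two, Matrix.diagonal,
        Matrix.conjTranspose_apply, Matrix.one_apply, mul_comm, Complex.mul_conj, Complex.sq_norm,
        Complex.ext_iff, Complex.normSq_apply]
  have h1 := Matrix.l2_opNorm_conjTranspose_mul_self A
  rw [hA, norm_smul, CStarRing.norm_one, mul_one, Real.norm_eq_abs,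
    _root_.abs_of_nonneg (by positivity)] at h1
  nlinarith [norm_nonneg A, norm_nonneg z, sq_nonneg (‖A‖ - ‖z‖)]

theorem stmt_9 :
    ∃ C : ℝ, 0 < C ∧
      ∀ (q₁ q₂ φ₁ φ₂ : ℝ), 0 ≤ q₁ → 0 ≤ q₂ → q₁ + q₂ = 1 → q₁ * φ₁ + q₂ * φ₂ = 0 →
        ∀ (V : Fin 2 → Matrix (Fin 2) (Fin 2) ℂ),
          (∀ j, V j = Matrix.diagonal
              ![Complex.exp (Complex.I * (![φ₁, φ₂] j)),
                Complex.exp (-(Complex.I * (![φ₁, φ₂] j)))]) →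
          ∀ (Wbar : Matrix (Fin 2) (Fin 2) ℂ),
            Wbar = (q₁ : ℂ) • V 0 + (q₂ : ℂ) • V 1 →
            (∀ j, ‖V j - Wbar‖ =
                ‖(Complex.exp (Complex.I * (![φ₁, φ₂] j))
                  - (q₁ : ℂ) * Complex.exp (Complex.I * φ₁)
                  - (q₂ : ℂ) * Complex.exp (Complex.I * φ₂))‖) ∧
            q₁ * ‖V 0 - Wbar‖ ^ 2 + q₂ * ‖V 1 - Wbar‖ ^ 2 ≤
              q₁ * φ₁ ^ 2 + q₂ * φ₂ ^ 2 + C * (φ₁ ^ 4 + φ₂ ^ 4) := by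
  refine ⟨1, one_pos, ?_⟩
  intro q₁ q₂ φ₁ φ₂ hq₁ hq₂ hsum hzero V hV Wbar hW
  set z : Fin 2 → ℂ := fun j => Complex.exp (Complex.I * (![φ₁, φ₂] j))
    - (q₁ : ℂ) * Complex.exp (Complex.I * φ₁) - (q₂ : ℂ) * Complex.exp (Complex.I * φ₂)
    with hz
  have hconj : ∀ φ : ℝ, (starRingEnd ℂ) (Complex.exp (Complex.I * φ))
      = Complex.exp (-(Complex.I * φ)) := by
    intro φ
    rw [← Complex.exp_conj, _root_.map_mul, Complex.conj_I, Complex.conj_ofReal, neg_mul]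
  have hdiag : ∀ j, V j - Wbar = Matrix.diagonal ![z j, (starRingEnd ℂ) (z j)] := by
    intro j
    have hstar : (starRingEnd ℂ) (z j)
        = Complex.exp (-(Complex.I * (![φ₁, φ₂] j)))
          - (q₁ : ℂ) * Complex.exp (-(Complex.I * φ₁))
          - (q₂ : ℂ) * Complex.exp (-(Complex.I * φ₂)) := by
      simp [hz, map_sub, _root_.map_mul, Complex.conj_ofReal, hconj]
    rw [hW, hV 0, hV 1, hV j]
    ext i k
    fin_cases j <;> fin_cases i <;> fin_cases k <;>
      simp [Matrix.diagonal, hstar, hz, hconj] <;> ring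
  have hnorm : ∀ j, ‖V j - Wbar‖ = ‖z j‖ := by
    intro j; rw [hdiag j, norm_diag_conj]
  refine ⟨fun j => hnorm j, ?_⟩
  rw [hnorm 0, hnorm 1]
  have hcq : (q₁ : ℂ) + q₂ = 1 := by exact_mod_cast hsum
  set E₁ := Complex.exp (Complex.I * φ₁) with hE₁
  set E₂ := Complex.exp (Complex.I * φ₂) with hE₂
  have e₀ : z 0 = (q₂ : ℂ) * (E₁ - E₂) := by
    simp only [hz]
    norm_num
    linear_combination (-E₁) * hcq
  have e₁ : z 1 = (q₁ : ℂ) * (E₂ - E₁) := by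
    simp only [hz]
    norm_num
    linear_combination (-E₂) * hcq
  set d := ‖E₁ - E₂‖ with hdd
  have ha0 : ‖z 0‖ = q₂ * d := by
    rw [e₀, norm_mul, Complex.norm_real, Real.norm_eq_abs, _root_.abs_of_nonneg hq₂]
  have ha1 : ‖z 1‖ = q₁ * d := by
    rw [e₁, norm_mul, Complex.norm_real, Real.norm_eq_abs, _root_.abs_of_nonneg hq₁, hdd,
      show E₂ - E₁ = -(E₁ - E₂) by ring, norm_neg]
  have hE₁re : E₁.re = Real.cos φ₁ := by rw [hE₁, mul_comm]; exact Complex.exp_ofReal_mul_I_re φ₁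
  have hE₁im : E₁.im = Real.sin φ₁ := by rw [hE₁, mul_comm]; exact Complex.exp_ofReal_mul_I_im φ₁
  have hE₂re : E₂.re = Real.cos φ₂ := by rw [hE₂, mul_comm]; exact Complex.exp_ofReal_mul_I_re φ₂
  have hE₂im : E₂.im = Real.sin φ₂ := by rw [hE₂, mul_comm]; exact Complex.exp_ofReal_mul_I_im φ₂
  have hd2 : d ^ 2 = 2 - 2 * Real.cos (φ₁ - φ₂) := by
    rw [hdd, Complex.sq_norm, Complex.normSq_apply, Complex.sub_re, Complex.sub_im,
      hE₁re, hE₁im, hE₂re, hE₂im, Real.cos_sub]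
    linear_combination Real.sin_sq_add_cos_sq φ₁ + Real.sin_sq_add_cos_sq φ₂
  have hcos : 1 - (φ₁ - φ₂) ^ 2 / 2 ≤ Real.cos (φ₁ - φ₂) := Real.one_sub_sq_div_two_le_cos
  have hdle : d ^ 2 ≤ (φ₁ - φ₂) ^ 2 := by rw [hd2]; linarith
  rw [ha0, ha1]
  have hid : q₁*q₂*(φ₁-φ₂)^2 = q₁*φ₁^2 + q₂*φ₂^2 := by
    linear_combination (-(q₁*φ₁+q₂*φ₂))*hzero + (q₁*φ₁^2+q₂*φ₂^2)*hsum
  have hL : q₁*(q₂*d)^2 + q₂*(q₁*d)^2 = q₁*q₂*d^2 := by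
    linear_combination (q₁*q₂*d^2)*hsum
  linarith [hL, hid, mul_le_mul_of_nonneg_left hdle (mul_nonneg hq₁ hq₂),
    sq_nonneg (φ₁^2), sq_nonneg (φ₂^2)]
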